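/- Assume that 2^μ = μ⁺ for every singular cardinal μ and that there are no regular limit cardinals (no weakly inaccessible cardinals). Then for every set A of infinite regular cardinals, spec(A) = pcf(A). -/

import Mathlib

universe u

open Cardinal Set

namespace TukeySpec

/-- A subset `S` of a preorder is cofinal if every element has an upper bound in `S`. -/
def IsCofinal {P : Type*} [Preorder P] (S : Set P) : Prop :=
  ∀ p : P, ∃ s ∈ S, p ≤ s

/-- `Q` is a Tukey quotient of `P` (i.e. `P ≥_T Q`): there is a map `P → Q`
sending cofinal sets to cofinal sets. -/
def TukeyQuot (P : Type*) (Q : Type*) [Preorder P] [Preorder Q] : Prop :=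
  ∃ φ : P → Q, ∀ S : Set P, IsCofinal S → IsCofinal (φ '' S)

/-- `P` has calibre `(κ, l, m)`. -/
def Calibre (P : Type u) [Preorder P] (κ l m : Cardinal.{u}) : Prop :=
  ∀ P' : Set P, #P' = κ → ∃ R ⊆ P', #R = l ∧ ∀ B ⊆ R, #B = m → BddAbove B

/-- `P` has calibre `κ` (the simplified form): every `κ`-sized subset has a
`κ`-sized subset which is bounded in `P`. -/
def CalibreSimple (P : Type u) [Preorder P] (κ : Cardinal.{u}) : Prop :=
  ∀ P' : Set P, #P' = κ → ∃ R ⊆ P', #R = κ ∧ BddAbove R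

/-- The Tukey spectrum of a poset: all regular cardinals `κ` with `P ≥_T κ`,
where `κ` carries its usual (ordinal) ordering. -/
def specPoset (P : Type u) [Preorder P] : Set Cardinal.{u} :=
  {κ | κ.IsRegular ∧ TukeyQuot P ↥(Set.Iio κ.ord)}

/-- The product `∏A` of a set of cardinals: all functions on `A` with
`f a < a` (as ordinals). -/
def piSet (A : Set Cardinal.{0}) : Set (↥A → Ordinal.{0}) :=
  {f | ∀ a : ↥A, f a < (a : Cardinal).ord}

/-- A family of members of `∏A` is bounded if it has an upper bound in `(∏A, ≤)`
(pointwise order). -/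
def BddIn (A : Set Cardinal.{0}) (S : Set (↥A → Ordinal.{0})) : Prop :=
  ∃ h ∈ piSet A, ∀ f ∈ S, ∀ a : ↥A, f a ≤ h a

/-- The Tukey spectrum of a set `A` of regular cardinals: all regular `κ` for which
there is a `κ`-sized family `F ⊆ ∏A` all of whose `κ`-sized subfamilies are
unbounded in `(∏A, ≤)`. -/
def spec (A : Set Cardinal.{0}) : Set Cardinal.{0} :=
  {κ | κ.IsRegular ∧ ∃ F ⊆ piSet A, #F = Cardinal.lift.{1} κ ∧
    ∀ F₀ ⊆ F, #F₀ = Cardinal.lift.{1} κ → ¬ BddIn A F₀}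

/-- `cf(∏A/D)`: the least cardinality of a subset of `∏A` which is cofinal
modulo the ultrafilter `D`. -/
noncomputable def cofUlt (A : Set Cardinal.{0}) (D : Ultrafilter ↥A) : Cardinal.{1} :=
  sInf {c : Cardinal.{1} | ∃ S ⊆ piSet A, #S = c ∧
    ∀ f ∈ piSet A, ∃ g ∈ S, {a : ↥A | f a ≤ g a} ∈ D}

/-- `pcf(A)`: the set of all cofinalities `cf(∏A/D)` as `D` ranges over
ultrafilters on `A`. -/
def pcf (A : Set Cardinal.{0}) : Set Cardinal.{0} :=
  {κ | ∃ D : Ultrafilter ↥A, Cardinal.lift.{1} κ = cofUlt A D}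

/-- `ub(F)`: the set of coordinates `a ∈ A` where the family `F` is unbounded. -/
def ub (A : Set Cardinal.{0}) (F : Set (↥A → Ordinal.{0})) : Set ↥A :=
  {a | ∀ β < (a : Cardinal).ord, ∃ f ∈ F, β < f a}

/-- The strong part of the Tukey spectrum: `l ∈ spec*(A)` iff there is an
`l`-sized family `F ⊆ ∏A` such that every `l`-sized subfamily has a set of
unbounded coordinates which is unbounded in `sup A`. -/
def specStarMem (A : Set Cardinal.{0}) (l : Cardinal.{0}) : Prop :=
  l.IsRegular ∧ ∃ F ⊆ piSet A, #F = Cardinal.lift.{1} l ∧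
    ∀ F₀ ⊆ F, #F₀ = Cardinal.lift.{1} l →
      ∀ β < sSup A, ∃ a ∈ ub A F₀, β < (a : Cardinal)

/-- `κ` is a limit point of the set `X` of cardinals. -/
def IsLimitPt (X : Set Cardinal.{0}) (κ : Cardinal.{0}) : Prop :=
  ∀ β < κ, ∃ x ∈ X, β < x ∧ x < κ

/-- `C` is a closed unbounded subset of `κ`. -/
def IsClubIn (C : Set Ordinal.{0}) (κ : Ordinal.{0}) : Prop :=
  C ⊆ Set.Iio κ ∧ (∀ β < κ, ∃ o ∈ C, β < o) ∧
    ∀ β < κ, β ≠ 0 → (∀ γ < β, ∃ o ∈ C, γ < o ∧ o < β) → β ∈ C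

/-- A set `S` of cardinals is stationary in `κ`: it meets every club of `κ`. -/
def StatIn (S : Set Cardinal.{0}) (κ : Cardinal.{0}) : Prop :=
  ∀ C : Set Ordinal.{0}, IsClubIn C κ.ord → ∃ a ∈ S, a.ord ∈ C

/-- `κ` is Mahlo: strongly inaccessible and the regular cardinals below `κ`
are stationary in `κ`. -/
def IsMahlo (κ : Cardinal.{0}) : Prop :=
  κ.IsInaccessible ∧ StatIn {a | a < κ ∧ a.IsRegular} κ

/-- `κ` is weakly compact: strongly inaccessible and `κ → (κ)²₂`. -/
def IsWeaklyCompact (κ : Cardinal.{0}) : Prop :=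
  κ.IsInaccessible ∧
    ∀ c : Ordinal.{0} → Ordinal.{0} → Bool,
      ∃ H ⊆ Set.Iio κ.ord, #H = Cardinal.lift.{1} κ ∧
        ∃ b : Bool, ∀ α ∈ H, ∀ β ∈ H, α < β → c α β = b

/-- `θ` carries a Jónsson algebra: there is `F` from finite subsets of `θ` to `θ`
such that `F` applied to finite subsets of any `θ`-sized `H ⊆ θ` covers `θ`. -/
def CarriesJonsson (θ : Cardinal.{0}) : Prop :=
  ∃ F : Finset Ordinal.{0} → Ordinal.{0},
    (∀ s : Finset Ordinal.{0}, (↑s : Set Ordinal) ⊆ Set.Iio θ.ord → F s < θ.ord) ∧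
    ∀ H ⊆ Set.Iio θ.ord, #H = Cardinal.lift.{1} θ →
      ∀ γ < θ.ord, ∃ s : Finset Ordinal.{0}, (↑s : Set Ordinal) ⊆ H ∧ F s = γ

/-- `cf(∏A/J_bd)`: the least cardinality of a subset of `∏A` cofinal modulo
the ideal of bounded subsets of `A`. -/
noncomputable def cofJbd (A : Set Cardinal.{0}) : Cardinal.{1} :=
  sInf {c : Cardinal.{1} | ∃ S ⊆ piSet A, #S = c ∧
    ∀ f ∈ piSet A, ∃ g ∈ S, ∃ b < sSup A, ∀ a : ↥A, b < (a : Cardinal) → f a ≤ g a}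

/-- `μ` is a limit cardinal. -/
def IsLimitCard (μ : Cardinal.{0}) : Prop :=
  ℵ₀ ≤ μ ∧ ∀ ν < μ, Order.succ ν < μ

section Dev
open Ordinal

variable {A : Set Cardinal.{0}}

lemma ord_pos_of_reg {a : Cardinal.{0}} (ha : ℵ₀ ≤ a) : (0 : Ordinal) < a.ord := by
  rw [Cardinal.lt_ord]; simpa using lt_of_lt_of_le Cardinal.aleph0_pos ha

lemma zero_mem_piSet (hA : ∀ a ∈ A, Cardinal.IsRegular a) : (fun _ => (0:Ordinal.{0})) ∈ piSet A :=
  fun a => ord_pos_of_reg (hA a a.2).1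

lemma succ_mem_piSet (hA : ∀ a ∈ A, Cardinal.IsRegular a) {f : ↥A → Ordinal.{0}}
    (hf : f ∈ piSet A) : (fun a => f a + 1) ∈ piSet A := by
  intro a
  exact (Cardinal.isSuccLimit_ord (hA a a.2).1).succ_lt (hf a)

lemma le_sSup_of_lt {o : Ordinal.{0}} {X : Set Ordinal.{0}} (hX : X ⊆ Set.Iio o)
    {x : Ordinal} (hx : x ∈ X) : x ≤ sSup X := by
  haveI : Small.{0} ↥X := small_subset hX
  exact le_csSup (Ordinal.bddAbove_of_small) hx

lemma sSup_lt_of_card {o : Ordinal.{0}} {X : Set Ordinal.{0}} (hX : X ⊆ Set.Iio o)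
    (hc : #X < Cardinal.lift.{1} o.cof) : sSup X < o := by
  have hopos : (0:Ordinal) < o := by
    by_contra h
    push_neg at h
    have : o = 0 := le_antisymm h (bot_le (a := o))
    rw [this] at hc
    simp [Ordinal.cof_zero] at hc
  rcases X.eq_empty_or_nonempty with rfl | hne
  · simpa [csSup_empty] using hopos
  · have hsmall : Small.{0} ↥X := small_subset hX
    set e : Shrink ↥X ≃ ↥X := (equivShrink ↥X).symm with he
    haveI : Nonempty ↥X := hne.to_subtype
    haveI : Nonempty (Shrink ↥X) := (equivShrink ↥X).symm.nonempty
    have hcard : Cardinal.lift.{1} #(Shrink ↥X) = #↥X := by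
      have := Cardinal.lift_mk_shrink'' ↥X
      simpa using this.symm
    have hlt : #(Shrink ↥X) < o.cof := by
      rwa [← hcard, Cardinal.lift_lt] at hc
    have hsup : sSup X = ⨆ i : Shrink ↥X, ((e i : ↥X) : Ordinal) := by
      apply le_antisymm
      · apply csSup_le hne
        intro x hx
        have : x = ((e (equivShrink ↥X ⟨x, hx⟩) : ↥X) : Ordinal) := by simp [he]
        rw [this]
        exact le_ciSup (f := fun i : Shrink ↥X => ((e i : ↥X) : Ordinal))
          ⟨o, by rintro y ⟨i, rfl⟩; exact le_of_lt (hX (e i).2)⟩ _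
      · haveI : Small.{0} ↥X := small_subset hX
        apply ciSup_le
        intro i
        exact le_csSup (Ordinal.bddAbove_of_small) (e i).2
    rw [hsup]
    exact Ordinal.iSup_lt_ord hlt (fun i => hX (e i).2)

lemma mk_Iio_ord (c : Cardinal.{0}) : #(Set.Iio c.ord) = Cardinal.lift.{1} c := by
  rw [Ordinal.mk_Iio_ordinal, Cardinal.card_ord]

lemma exists_enum {α : Type 1} {S : Set α} (hne : S.Nonempty) {c : Cardinal.{0}}
    (h : #S ≤ Cardinal.lift.{1} c) :
    ∃ σ : ↥(Set.Iio c.ord) → α, (∀ i, σ i ∈ S) ∧ ∀ g ∈ S, ∃ i, σ i = g := by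
  rw [← mk_Iio_ord] at h
  obtain ⟨emb⟩ := Cardinal.le_def _ _ |>.1 h
  have : Nonempty ↥S := hne.to_subtype
  refine ⟨fun i => (Function.invFun emb i : ↥S), fun i => (Function.invFun emb i).2, ?_⟩
  intro g hg
  exact ⟨emb ⟨g, hg⟩, congrArg Subtype.val (Function.leftInverse_invFun emb.injective ⟨g, hg⟩)⟩

lemma isRegular_lift {c : Cardinal.{0}} (h : c.IsRegular) : (Cardinal.lift.{1} c).IsRegular := by
  constructor
  · rw [← Cardinal.lift_aleph0.{1,0}]; exact Cardinal.lift_le.2 h.1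
  · rw [← Cardinal.lift_ord, ← Ordinal.lift_cof]
    exact Cardinal.lift_le.2 h.2

end Dev
section Dev2
open Ordinal

lemma mk_piSet_empty : #(piSet (∅ : Set Cardinal.{0})) ≤ 1 := by
  rw [Cardinal.mk_le_one_iff_set_subsingleton]
  intro f _ g _
  funext a
  exact absurd a.2 (Set.notMem_empty _)

lemma mk_piSet_split {C : Set Cardinal.{0}} {x : Cardinal.{0}} (hx : x ∈ C) :
    #(piSet C) ≤ Cardinal.lift.{1} x * #(piSet (C \ {x})) := by
  have key : #(piSet C) ≤ #(↥(Set.Iio x.ord) × ↥(piSet (C \ {x}))) := by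
    apply Cardinal.mk_le_of_injective
      (f := fun f => (⟨f.1 ⟨x, hx⟩, f.2 ⟨x, hx⟩⟩,
        ⟨fun a => f.1 ⟨a.1, a.2.1⟩, fun a => f.2 ⟨a.1, a.2.1⟩⟩))
    intro f g h
    obtain ⟨h1, h2⟩ := Prod.mk.injEq .. ▸ h
    apply Subtype.ext
    funext a
    by_cases hax : (a : Cardinal) = x
    · have : a = ⟨x, hx⟩ := Subtype.ext hax
      rw [this]
      exact congrArg Subtype.val h1
    · exact congrFun (congrArg Subtype.val h2) ⟨a.1, a.2, hax⟩
  rw [Cardinal.mk_prod, Cardinal.lift_id, Cardinal.lift_id, mk_Iio_ord] at key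
  exact key

lemma mk_le_lift_of_le {C : Set Cardinal.{0}} {l : Cardinal.{0}} (hl : ℵ₀ ≤ l)
    (h : ∀ a ∈ C, a ≤ l) : #C ≤ Cardinal.lift.{1} l := by
  have : #C ≤ #(Set.Iic l.ord) := by
    apply Cardinal.mk_le_of_injective (f := fun a => ⟨(a:Cardinal).ord, ord_le_ord.2 (h a a.2)⟩)
    intro a b hab
    exact Subtype.ext (ord_injective (congrArg Subtype.val hab))
  rw [← Order.Iio_succ, ← Ordinal.add_one_eq_succ, Ordinal.mk_Iio_ordinal] at this
  rw [Ordinal.add_one_eq_succ, Ordinal.card_succ, Cardinal.card_ord,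
    Cardinal.add_one_eq hl] at this
  exact this

lemma mk_piSet_le_power {C : Set Cardinal.{0}} {l : Cardinal.{0}}
    (h : ∀ a ∈ C, a ≤ l) : #(piSet C) ≤ Cardinal.lift.{1} l ^ #↥C := by
  have key : #(piSet C) ≤ #(↥C → ↥(Set.Iio l.ord)) := by
    apply Cardinal.mk_le_of_injective
      (f := fun f a => ⟨f.1 a, lt_of_lt_of_le (f.2 a) (ord_le_ord.2 (h a a.2))⟩)
    intro f g hfg
    apply Subtype.ext; funext a
    exact congrArg Subtype.val (congrFun hfg a)
  rwa [← Cardinal.power_def, mk_Iio_ord] at key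

lemma prod_bound
    (hgch : ∀ μ : Cardinal.{0}, ℵ₀ ≤ μ → ¬ μ.IsRegular → 2 ^ μ = Order.succ μ)
    (hnoInacc : ∀ κ : Cardinal.{0},
      ¬ (ℵ₀ < κ ∧ κ.IsRegular ∧ ∀ ν < κ, Order.succ ν < κ))
    (l : Cardinal.{0}) :
    ∀ (C : Set Cardinal.{0}), BddAbove C → (∀ a ∈ C, a.IsRegular) → sSup C = l →
      #(piSet C) ≤ Cardinal.lift.{1} (Order.succ l) ∧
        (l ∈ C → #(piSet C) ≤ Cardinal.lift.{1} l) := by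
  induction l using WellFoundedLT.induction with
  | _ l IH =>
  intro C hbdd hC hsup
  rcases C.eq_empty_or_nonempty with rfl | hCne
  · constructor
    · refine le_trans mk_piSet_empty ?_
      rw [Cardinal.lift_succ]
      exact Cardinal.one_le_iff_ne_zero.2 (Order.succ_ne_bot _)
    · intro h; exact absurd h (Set.notMem_empty _)
  · obtain ⟨a₀, ha₀⟩ := id hCne
    have hl0 : ℵ₀ ≤ l := le_trans (hC a₀ ha₀).1 (hsup ▸ le_csSup hbdd ha₀)
    have hmem : l ∈ C → #(piSet C) ≤ Cardinal.lift.{1} l := by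
      intro hlC
      have hsplit := mk_piSet_split hlC
      rcases (C \ {l}).eq_empty_or_nonempty with hemp | hne'
      · rw [hemp] at hsplit
        calc #(piSet C) ≤ Cardinal.lift.{1} l * 1 :=
              le_trans hsplit (mul_le_mul_right mk_piSet_empty _)
          _ = Cardinal.lift.{1} l := mul_one _
      · set C' := C \ {l} with hC'
        have hbdd' : BddAbove C' := hbdd.mono (Set.diff_subset)
        have hub' : ∀ x ∈ C', x ≤ l := fun x hx =>
          hsup ▸ le_csSup hbdd hx.1
        have hl'le : sSup C' ≤ l := csSup_le hne' hub'
        have hl'lt : sSup C' < l := by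
          rcases lt_or_eq_of_le hl'le with h | h
          · exact h
          · exfalso
            apply hnoInacc l
            refine ⟨?_, hC l hlC, ?_⟩
            · obtain ⟨x, hx, hx0⟩ := exists_lt_of_lt_csSup hne'
                (h.symm ▸ (lt_of_lt_of_le Cardinal.aleph0_pos hl0 : (0:Cardinal) < l))
              have hxl : x < l := lt_of_le_of_ne (hub' x hx) (fun he => hx.2 he)
              exact lt_of_le_of_lt (hC x hx.1).1 hxl
            · intro ν hν
              obtain ⟨x, hx, hνx⟩ := exists_lt_of_lt_csSup hne' (h ▸ hν)
              have hxl : x < l := lt_of_le_of_ne (hub' x hx) (fun he => hx.2 he)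
              exact lt_of_le_of_lt (Order.succ_le_of_lt hνx) hxl
        obtain ⟨hsucc, _⟩ := IH (sSup C') hl'lt C' hbdd' (fun a ha => hC a ha.1) rfl
        have : #(piSet C') ≤ Cardinal.lift.{1} l :=
          le_trans hsucc (Cardinal.lift_le.2 (Order.succ_le_of_lt hl'lt))
        calc #(piSet C) ≤ Cardinal.lift.{1} l * Cardinal.lift.{1} l :=
              le_trans hsplit (mul_le_mul_right this _)
          _ = Cardinal.lift.{1} l := Cardinal.mul_eq_self (by simpa using hl0)
    refine ⟨?_, hmem⟩
    by_cases hlC : l ∈ C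
    · exact le_trans (hmem hlC) (Cardinal.lift_le.2 (le_of_lt (Order.lt_succ l)))
    · -- l is a limit point, singular by hnoInacc
      have hub : ∀ x ∈ C, x ≤ l := fun x hx => hsup ▸ le_csSup hbdd hx
      have hlim : ∀ ν < l, ∃ x ∈ C, ν < x ∧ x < l := by
        intro ν hν
        obtain ⟨x, hx, hνx⟩ := exists_lt_of_lt_csSup hCne (hsup.symm ▸ hν)
        exact ⟨x, hx, hνx, lt_of_le_of_ne (hub x hx) (fun he => hlC (he ▸ hx))⟩
      have hl0' : ℵ₀ < l := by
        obtain ⟨x, hx, _, hxl⟩ := hlim 0 (lt_of_lt_of_le Cardinal.aleph0_pos hl0)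
        exact lt_of_le_of_lt (hC x hx).1 hxl
      have hsing : ¬ l.IsRegular := by
        intro hreg
        exact hnoInacc l ⟨hl0', hreg, fun ν hν => by
          obtain ⟨x, hx, hνx, hxl⟩ := hlim ν hν
          exact lt_of_le_of_lt (Order.succ_le_of_lt hνx) hxl⟩
      have hpow := mk_piSet_le_power hub
      have hcard : #↥C ≤ Cardinal.lift.{1} l := mk_le_lift_of_le hl0 hub
      calc #(piSet C) ≤ Cardinal.lift.{1} l ^ #↥C := hpow
        _ ≤ Cardinal.lift.{1} l ^ Cardinal.lift.{1} l :=
            Cardinal.power_le_power_left (by simpa using (Cardinal.aleph0_pos.trans_le hl0).ne') hcard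
        _ = Cardinal.lift.{1} (l ^ l) := (Cardinal.lift_power l l).symm
        _ = Cardinal.lift.{1} (2 ^ l) := by rw [Cardinal.power_self_eq hl0]
        _ = Cardinal.lift.{1} (Order.succ l) := by rw [hgch l hl0 hsing]

end Dev2
section Dev3
open Ordinal

variable {A : Set Cardinal.{0}}

lemma S_nonempty (hA : ∀ a ∈ A, Cardinal.IsRegular a) {D : Ultrafilter ↥A}
    {S : Set (↥A → Ordinal.{0})}
    (hcf : ∀ f ∈ piSet A, ∃ g ∈ S, {a : ↥A | f a ≤ g a} ∈ D) : S.Nonempty := by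
  obtain ⟨g, hg, -⟩ := hcf _ (zero_mem_piSet hA)
  exact ⟨g, hg⟩

lemma tail_diag (hA : ∀ a ∈ A, Cardinal.IsRegular a) {D : Ultrafilter ↥A} {c : Cardinal.{0}}
    (htail : {a : ↥A | c < (a : Cardinal)} ∈ D) {S : Set (↥A → Ordinal.{0})}
    (hS : S ⊆ piSet A) (hcf : ∀ f ∈ piSet A, ∃ g ∈ S, {a : ↥A | f a ≤ g a} ∈ D) :
    ¬ (#S ≤ Cardinal.lift.{1} c) := by
  intro hcard
  obtain ⟨σ, hσS, hσonto⟩ := exists_enum (S_nonempty hA hcf) hcard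
  set X : ↥A → Set Ordinal.{0} :=
    fun a => (fun i : ↥(Set.Iio c.ord) => σ i a + 1) '' Set.univ with hX
  have hXsub : ∀ a : ↥A, X a ⊆ Set.Iio (a : Cardinal).ord := by
    rintro a x ⟨i, -, rfl⟩
    exact (Cardinal.isSuccLimit_ord (hA a a.2).1).succ_lt (hS (hσS i) a)
  have hXcard : ∀ a : ↥A, #(X a) ≤ Cardinal.lift.{1} c := by
    intro a
    refine le_trans Cardinal.mk_image_le ?_
    rw [Cardinal.mk_univ, mk_Iio_ord]
  set g : ↥A → Ordinal.{0} := fun a =>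
    if c < (a : Cardinal) then sSup (X a) else 0 with hg
  have hgpi : g ∈ piSet A := by
    intro a
    by_cases h : c < (a : Cardinal)
    · rw [hg]; simp only [if_pos h]
      refine sSup_lt_of_card (hXsub a) ?_
      refine lt_of_le_of_lt (hXcard a) ?_
      rw [(hA a a.2).cof_eq]
      exact Cardinal.lift_lt.2 h
    · rw [hg]; simp only [if_neg h]
      exact ord_pos_of_reg (hA a a.2).1
  obtain ⟨gS, hgS, hDle⟩ := hcf g hgpi
  obtain ⟨i₀, rfl⟩ := hσonto gS hgS
  obtain ⟨a, hca, hle⟩ := Filter.nonempty_of_mem (Filter.inter_mem htail hDle)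
  have hca' : c < (a : Cardinal) := hca
  have h5 : σ i₀ a + 1 ≤ g a := by
    rw [hg]; simp only [if_pos hca']
    exact le_sSup_of_lt (hXsub a) ⟨i₀, Set.mem_univ _, rfl⟩
  have : σ i₀ a < σ i₀ a :=
    lt_of_lt_of_le (by rw [Ordinal.add_one_eq_succ]; exact Order.lt_succ _) (le_trans h5 hle)
  exact this.false

lemma interior_diag (hA : ∀ a ∈ A, Cardinal.IsRegular a) {D : Ultrafilter ↥A}
    {μ : Cardinal.{0}}
    (hD : ∀ β < μ, {a : ↥A | β < (a : Cardinal) ∧ (a : Cardinal) < μ} ∈ D)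
    (hcof : μ.ord.cof < μ)
    {S : Set (↥A → Ordinal.{0})} (hS : S ⊆ piSet A)
    (hcf : ∀ f ∈ piSet A, ∃ g ∈ S, {a : ↥A | f a ≤ g a} ∈ D) :
    ¬ (#S ≤ Cardinal.lift.{1} μ) := by
  intro hcard
  obtain ⟨σ, hσS, hσonto⟩ := exists_enum (S_nonempty hA hcf) hcard
  obtain ⟨ι, cs, hlsub, hι⟩ := Ordinal.exists_lsub_cof μ.ord
  have hcslt : ∀ j, cs j < μ.ord := fun j => hlsub ▸ Ordinal.lt_lsub cs j
  set Idx : ↥A → Set ↥(Set.Iio μ.ord) :=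
    fun a => {i | ∃ j : ι, (cs j).card < (a : Cardinal) ∧ i.1 ≤ cs j} with hIdx
  set X : ↥A → Set Ordinal.{0} :=
    fun a => (fun i : ↥(Set.Iio μ.ord) => σ i a + 1) '' (Idx a) with hX
  have hXsub : ∀ a : ↥A, X a ⊆ Set.Iio (a : Cardinal).ord := by
    rintro a x ⟨i, -, rfl⟩
    exact (Cardinal.isSuccLimit_ord (hA a a.2).1).succ_lt (hS (hσS i) a)
  have hXcard : ∀ a : ↥A, μ.ord.cof < (a : Cardinal) →
      #(X a) < Cardinal.lift.{1} (a : Cardinal) := by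
    intro a ha
    have ha0 : ℵ₀ ≤ (a : Cardinal) := (hA a a.2).1
    refine lt_of_le_of_lt Cardinal.mk_image_le ?_
    have hsub2 : Idx a ⊆ ⋃ j : ι,
        {i : ↥(Set.Iio μ.ord) | (cs j).card < (a : Cardinal) ∧ i.1 ≤ cs j} := by
      rintro i ⟨j, hj1, hj2⟩
      exact Set.mem_iUnion.2 ⟨j, hj1, hj2⟩
    refine lt_of_le_of_lt (Cardinal.mk_le_mk_of_subset hsub2) ?_
    have hcup : #(⋃ j : ι, {i : ↥(Set.Iio μ.ord) | (cs j).card < (a : Cardinal) ∧ i.1 ≤ cs j})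
        ≤ Cardinal.sum (fun j : ι =>
          #({i : ↥(Set.Iio μ.ord) | (cs j).card < (a : Cardinal) ∧ i.1 ≤ cs j})) := by
      have := Cardinal.mk_iUnion_le_sum_mk_lift
        (f := fun j : ι => {i : ↥(Set.Iio μ.ord) | (cs j).card < (a : Cardinal) ∧ i.1 ≤ cs j})
      simpa using this
    refine lt_of_le_of_lt hcup ?_
    refine Cardinal.sum_lt_lift_of_isRegular (isRegular_lift (hA a a.2)) ?_ ?_
    · rw [hι]
      exact Cardinal.lift_lt.2 ha
    · intro j
      by_cases hj : (cs j).card < (a : Cardinal)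
      · have hinj : #({i : ↥(Set.Iio μ.ord) | (cs j).card < (a : Cardinal) ∧ i.1 ≤ cs j})
            ≤ #(Set.Iio (cs j + 1)) := by
          apply Cardinal.mk_le_of_injective
            (f := fun i => ⟨i.1.1, lt_of_le_of_lt i.2.2 (by
              rw [Ordinal.add_one_eq_succ]; exact Order.lt_succ _)⟩)
          intro x y hxy
          simp only [Subtype.mk.injEq] at hxy
          exact Subtype.ext (Subtype.ext (Subtype.mk.inj hxy))
        refine lt_of_le_of_lt hinj ?_
        rw [Ordinal.mk_Iio_ordinal, Ordinal.add_one_eq_succ, Ordinal.card_succ]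
        rw [Cardinal.lift_lt]
        exact Cardinal.add_lt_of_lt ha0 hj (lt_of_lt_of_le Cardinal.one_lt_aleph0 ha0)
      · have : {i : ↥(Set.Iio μ.ord) | (cs j).card < (a : Cardinal) ∧ i.1 ≤ cs j} = ∅ := by
          ext i; simp [hj]
        rw [this, Cardinal.mk_emptyCollection]
        have hpos : (0:Cardinal.{0}) < (a:Cardinal) := lt_of_lt_of_le Cardinal.aleph0_pos ha0
        simpa using hpos
  set g : ↥A → Ordinal.{0} := fun a =>
    if μ.ord.cof < (a : Cardinal) then sSup (X a) else 0 with hg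
  have hgpi : g ∈ piSet A := by
    intro a
    by_cases h : μ.ord.cof < (a : Cardinal)
    · rw [hg]; simp only [if_pos h]
      refine sSup_lt_of_card (hXsub a) ?_
      rw [(hA a a.2).cof_eq]
      exact hXcard a h
    · rw [hg]; simp only [if_neg h]
      exact ord_pos_of_reg (hA a a.2).1
  obtain ⟨gS, hgS, hDle⟩ := hcf g hgpi
  obtain ⟨i₀, rfl⟩ := hσonto gS hgS
  obtain ⟨j₀, hj₀⟩ : ∃ j, i₀.1 ≤ cs j := by
    apply lt_lsub_iff.1
    rw [hlsub]
    exact i₀.2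
  set β₀ : Cardinal.{0} := max μ.ord.cof (cs j₀).card with hβ₀def
  have hβ₀ : β₀ < μ := by
    apply max_lt hcof
    rw [← Cardinal.lt_ord]
    exact hcslt j₀
  obtain ⟨a, ⟨⟨hb1, hb2⟩, hle⟩⟩ := Filter.nonempty_of_mem (Filter.inter_mem (hD β₀ hβ₀) hDle)
  have hcofa : μ.ord.cof < (a : Cardinal) := lt_of_le_of_lt (le_max_left _ _) hb1
  have hmemX : σ i₀ a + 1 ∈ X a :=
    ⟨i₀, ⟨j₀, lt_of_le_of_lt (le_max_right _ _) hb1, hj₀⟩, rfl⟩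
  have h5 : σ i₀ a + 1 ≤ g a := by
    rw [hg]; simp only [if_pos hcofa]
    exact le_sSup_of_lt (hXsub a) hmemX
  have : σ i₀ a < σ i₀ a :=
    lt_of_lt_of_le (by rw [Ordinal.add_one_eq_succ]; exact Order.lt_succ _) (le_trans h5 hle)
  exact this.false

end Dev3
section Dev4
open Ordinal

variable {A : Set Cardinal.{0}}

/-- The defining set for `cofUlt`. -/
def cofSet (A : Set Cardinal.{0}) (D : Ultrafilter ↥A) : Set Cardinal.{1} :=
  {c : Cardinal.{1} | ∃ S ⊆ piSet A, #S = c ∧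
    ∀ f ∈ piSet A, ∃ g ∈ S, {a : ↥A | f a ≤ g a} ∈ D}

lemma cofUlt_eq_sInf (A : Set Cardinal.{0}) (D : Ultrafilter ↥A) :
    cofUlt A D = sInf (cofSet A D) := rfl

lemma cofSet_nonempty (A : Set Cardinal.{0}) (D : Ultrafilter ↥A) :
    (cofSet A D).Nonempty := by
  refine ⟨#(piSet A), piSet A, subset_rfl, rfl, fun f hf => ⟨f, hf, ?_⟩⟩
  have : {a : ↥A | f a ≤ f a} = Set.univ := by ext; simp
  rw [this]
  exact Filter.univ_mem

lemma cofUlt_le_of_mem {D : Ultrafilter ↥A} {c : Cardinal.{1}} (h : c ∈ cofSet A D) :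
    cofUlt A D ≤ c :=
  csInf_le (OrderBot.bddBelow _) h

lemma le_cofUlt {D : Ultrafilter ↥A} {b : Cardinal.{1}} (h : ∀ c ∈ cofSet A D, b ≤ c) :
    b ≤ cofUlt A D :=
  le_csInf (cofSet_nonempty A D) h

lemma upper_cofinal (hA : ∀ a ∈ A, Cardinal.IsRegular a) {D : Ultrafilter ↥A}
    {μ : Cardinal.{0}} (hmem : {a : ↥A | (a : Cardinal) < μ} ∈ D) :
    ∃ c ∈ cofSet A D, c ≤ #(piSet {x : Cardinal.{0} | x ∈ A ∧ x < μ}) := by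
  set S := {f : ↥A → Ordinal.{0} | f ∈ piSet A ∧ ∀ a : ↥A, ¬((a : Cardinal) < μ) → f a = 0}
    with hSdef
  refine ⟨#S, ⟨S, fun f hf => hf.1, rfl, ?_⟩, ?_⟩
  · intro f hf
    refine ⟨fun a => if (a : Cardinal) < μ then f a else 0, ⟨?_, ?_⟩, ?_⟩
    · intro a
      by_cases h : (a : Cardinal) < μ
      · simp only [if_pos h]; exact hf a
      · simp only [if_neg h]; exact ord_pos_of_reg (hA a a.2).1
    · intro a h; simp only [if_neg h]
    · refine Filter.mem_of_superset hmem ?_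
      intro a ha
      simp only [Set.mem_setOf_eq] at ha ⊢
      rw [if_pos ha]
  · apply Cardinal.mk_le_of_injective (f := fun f =>
      (⟨fun x => f.1 ⟨x.1, x.2.1⟩, fun x => f.2.1 ⟨x.1, x.2.1⟩⟩ :
        ↥(piSet {x : Cardinal.{0} | x ∈ A ∧ x < μ})))
    intro f g h
    have h' := congrArg Subtype.val h
    apply Subtype.ext
    funext a
    by_cases hax : (a : Cardinal) < μ
    · exact congrFun h' ⟨a.1, a.2, hax⟩
    · rw [f.2.2 a hax, g.2.2 a hax]

lemma cofUlt_eq_of_atom (hA : ∀ a ∈ A, Cardinal.IsRegular a) {D : Ultrafilter ↥A} {a₀ : ↥A}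
    (hmem : {a : ↥A | a = a₀} ∈ D) :
    cofUlt A D = Cardinal.lift.{1} (a₀ : Cardinal) := by
  apply le_antisymm
  · set S := (fun β : ↥(Set.Iio (a₀ : Cardinal).ord) =>
      (fun a : ↥A => if a = a₀ then β.1 else 0)) '' Set.univ with hSdef
    have hSsub : S ⊆ piSet A := by
      rintro f ⟨β, -, rfl⟩
      intro a
      by_cases h : a = a₀
      · simp only [if_pos h]
        rw [h]
        exact β.2
      · simp only [if_neg h]
        exact ord_pos_of_reg (hA a a.2).1
    have hScf : ∀ f ∈ piSet A, ∃ g ∈ S, {a : ↥A | f a ≤ g a} ∈ D := by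
      intro f hf
      refine ⟨_, ⟨⟨f a₀, hf a₀⟩, Set.mem_univ _, rfl⟩, ?_⟩
      refine Filter.mem_of_superset hmem ?_
      intro a ha
      simp only [Set.mem_setOf_eq] at ha ⊢
      subst ha
      simp
    refine le_trans (cofUlt_le_of_mem ⟨S, hSsub, rfl, hScf⟩) ?_
    refine le_trans Cardinal.mk_image_le ?_
    rw [Cardinal.mk_univ, mk_Iio_ord]
  · apply le_cofUlt
    rintro c ⟨S, hsub, rfl, hcf⟩
    by_contra hlt
    push_neg at hlt
    set X : Set Ordinal.{0} := Set.range (fun g : ↥S => g.1 a₀ + 1) with hXdef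
    have hXsub : X ⊆ Set.Iio (a₀ : Cardinal).ord := by
      rintro x ⟨g, rfl⟩
      exact (Cardinal.isSuccLimit_ord (hA a₀ a₀.2).1).succ_lt (hsub g.2 a₀)
    have hXcard : #X < Cardinal.lift.{1} (a₀ : Cardinal) :=
      lt_of_le_of_lt Cardinal.mk_range_le hlt
    have hsup : sSup X < (a₀ : Cardinal).ord := by
      refine sSup_lt_of_card hXsub ?_
      rw [(hA a₀ a₀.2).cof_eq]
      exact hXcard
    set f : ↥A → Ordinal.{0} := fun a => if a = a₀ then sSup X else 0 with hfdef
    have hfpi : f ∈ piSet A := by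
      intro a
      rw [hfdef]
      by_cases h : a = a₀
      · simp only [if_pos h]
        rw [h]
        exact hsup
      · simp only [if_neg h]
        exact ord_pos_of_reg (hA a a.2).1
    obtain ⟨g, hg, hD⟩ := hcf f hfpi
    obtain ⟨a, ha, hfa⟩ := Filter.nonempty_of_mem (Filter.inter_mem hmem hD)
    simp only [Set.mem_setOf_eq] at ha hfa
    subst ha
    have h1 : g a + 1 ≤ sSup X := le_sSup_of_lt hXsub ⟨⟨g, hg⟩, rfl⟩
    rw [hfdef] at hfa
    simp only [if_pos] at hfa
    have : g a < g a :=
      lt_of_lt_of_le (by rw [Ordinal.add_one_eq_succ]; exact Order.lt_succ _)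
        (le_trans h1 hfa)
    exact this.false

lemma exists_interval_ultrafilter {μ : Cardinal.{0}} (hlim : IsLimitPt A μ) (h0 : 0 < μ) :
    ∃ D : Ultrafilter ↥A, ∀ β < μ, {a : ↥A | β < (a : Cardinal) ∧ (a : Cardinal) < μ} ∈ D := by
  set F : Filter ↥A := {
    sets := {t | ∃ β < μ, {a : ↥A | β < (a : Cardinal) ∧ (a : Cardinal) < μ} ⊆ t}
    univ_sets := ⟨0, h0, Set.subset_univ _⟩
    sets_of_superset := fun ⟨β, hβ, hsub⟩ hst => ⟨β, hβ, hsub.trans hst⟩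
    inter_sets := fun ⟨β, hβ, h1⟩ ⟨γ, hγ, h2⟩ => ⟨max β γ, max_lt hβ hγ, fun a ha =>
      ⟨h1 ⟨lt_of_le_of_lt (le_max_left _ _) ha.1, ha.2⟩,
       h2 ⟨lt_of_le_of_lt (le_max_right _ _) ha.1, ha.2⟩⟩⟩ } with hFdef
  have hFmem : ∀ β < μ, {a : ↥A | β < (a : Cardinal) ∧ (a : Cardinal) < μ} ∈ F := by
    intro β hβ
    exact ⟨β, hβ, subset_rfl⟩
  haveI : F.NeBot := by
    rw [← Filter.forall_mem_nonempty_iff_neBot]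
    rintro s ⟨β, hβ, hsub⟩
    obtain ⟨x, hx, hβx, hxμ⟩ := hlim β hβ
    exact ⟨⟨x, hx⟩, hsub ⟨hβx, hxμ⟩⟩
  exact ⟨Ultrafilter.of F, fun β hβ => Filter.le_def.1 (Ultrafilter.of_le F) _ (hFmem β hβ)⟩

lemma cofUlt_eq_succ
    (hgch : ∀ μ : Cardinal.{0}, ℵ₀ ≤ μ → ¬ μ.IsRegular → 2 ^ μ = Order.succ μ)
    (hnoInacc : ∀ κ : Cardinal.{0},
      ¬ (ℵ₀ < κ ∧ κ.IsRegular ∧ ∀ ν < κ, Order.succ ν < κ))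
    (hA : ∀ a ∈ A, Cardinal.IsRegular a) {D : Ultrafilter ↥A} {μ : Cardinal.{0}}
    (hlim : IsLimitPt A μ) (hμ0 : ℵ₀ ≤ μ)
    (hD : ∀ β < μ, {a : ↥A | β < (a : Cardinal) ∧ (a : Cardinal) < μ} ∈ D) :
    cofUlt A D = Cardinal.lift.{1} (Order.succ μ) := by
  have h0 : (0 : Cardinal) < μ := lt_of_lt_of_le Cardinal.aleph0_pos hμ0
  have hμinf : ℵ₀ < μ := by
    obtain ⟨x, hx, -, hxμ⟩ := hlim 0 h0
    exact lt_of_le_of_lt (hA x hx).1 hxμ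
  have hsing : ¬ μ.IsRegular := by
    intro hreg
    refine hnoInacc μ ⟨hμinf, hreg, fun ν hν => ?_⟩
    obtain ⟨x, hx, hνx, hxμ⟩ := hlim ν hν
    exact lt_of_le_of_lt (Order.succ_le_of_lt hνx) hxμ
  have hcof : μ.ord.cof < μ := by
    rcases lt_or_ge μ.ord.cof μ with h | h
    · exact h
    · exact absurd ⟨hμ0, h⟩ hsing
  apply le_antisymm
  · -- upper bound
    set C : Set Cardinal.{0} := {x : Cardinal.{0} | x ∈ A ∧ x < μ} with hCdef
    have hCbdd : BddAbove C := ⟨μ, fun x hx => le_of_lt hx.2⟩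
    have hCne : C.Nonempty := by
      obtain ⟨x, hx, -, hxμ⟩ := hlim 0 h0
      exact ⟨x, hx, hxμ⟩
    have hCsup : sSup C = μ := by
      apply le_antisymm (csSup_le hCne (fun x hx => le_of_lt hx.2))
      by_contra hlt
      push_neg at hlt
      obtain ⟨x, hx, hsx, hxμ⟩ := hlim (sSup C) hlt
      exact absurd (le_csSup hCbdd (⟨hx, hxμ⟩ : x ∈ C)) (not_le_of_gt hsx)
    have hP := (prod_bound hgch hnoInacc μ C hCbdd (fun a ha => hA a ha.1) hCsup).1
    obtain ⟨c, hcmem, hcle⟩ := upper_cofinal hA (D := D)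
      (Filter.mem_of_superset (hD 0 h0) (fun a ha => ha.2))
    exact le_trans (cofUlt_le_of_mem hcmem) (le_trans hcle hP)
  · apply le_cofUlt
    rintro c ⟨S, hsub, rfl, hcf⟩
    have := interior_diag hA hD hcof hsub hcf
    rw [Cardinal.lift_succ, Order.succ_le_iff]
    exact not_le.1 this
end Dev4
section Dev5
open Ordinal

/-- The candidate common value of `spec` and `pcf`. -/
def Espec (A : Set Cardinal.{0}) : Set Cardinal.{0} :=
  A ∪ {κ | ∃ μ : Cardinal.{0}, ℵ₀ ≤ μ ∧ IsLimitPt A μ ∧ κ = Order.succ μ}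

variable {A : Set Cardinal.{0}}

lemma pcf_eq_E
    (hgch : ∀ μ : Cardinal.{0}, ℵ₀ ≤ μ → ¬ μ.IsRegular → 2 ^ μ = Order.succ μ)
    (hnoInacc : ∀ κ : Cardinal.{0},
      ¬ (ℵ₀ < κ ∧ κ.IsRegular ∧ ∀ ν < κ, Order.succ ν < κ))
    (hA : ∀ a ∈ A, Cardinal.IsRegular a) : pcf A = Espec A := by
  ext κ
  constructor
  · rintro ⟨D, hκ⟩
    by_cases hbig : ∃ ν : Cardinal.{0}, {a : ↥A | (a : Cardinal) ≤ ν} ∈ D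
    · set T : Set Cardinal.{0} := {ν | {a : ↥A | (a : Cardinal) ≤ ν} ∈ D} with hTdef
      have hTne : T.Nonempty := hbig
      set μ := sInf T with hμdef
      have hμmem : {a : ↥A | (a : Cardinal) ≤ μ} ∈ D := csInf_mem hTne
      have hnotbelow : ∀ β < μ, {a : ↥A | (a : Cardinal) ≤ β} ∉ D := by
        intro β hβ h
        exact absurd (csInf_le (OrderBot.bddBelow _) (show β ∈ T from h)) (not_le.2 hβ)
      by_cases hatom : {a : ↥A | (a : Cardinal) = μ} ∈ D
      · obtain ⟨a₀, ha₀⟩ := Filter.nonempty_of_mem hatom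
        have ha₀' : (a₀ : Cardinal) = μ := ha₀
        have heq : {a : ↥A | a = a₀} = {a : ↥A | (a : Cardinal) = μ} := by
          ext a
          simp only [Set.mem_setOf_eq]
          rw [← ha₀', Subtype.ext_iff]
        have := cofUlt_eq_of_atom hA (heq ▸ hatom)
        rw [this] at hκ
        have : κ = (a₀ : Cardinal) := Cardinal.lift_injective hκ
        exact Or.inl (this ▸ a₀.2)
      · have hlt : {a : ↥A | (a : Cardinal) < μ} ∈ D := by
          refine Filter.mem_of_superset
            (Filter.inter_mem hμmem (Ultrafilter.compl_mem_iff_notMem.2 hatom)) ?_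
          rintro a ⟨h1, h2⟩
          exact lt_of_le_of_ne h1 h2
        have hD' : ∀ β < μ, {a : ↥A | β < (a : Cardinal) ∧ (a : Cardinal) < μ} ∈ D := by
          intro β hβ
          refine Filter.mem_of_superset
            (Filter.inter_mem (Ultrafilter.compl_mem_iff_notMem.2 (hnotbelow β hβ)) hlt) ?_
          rintro a ⟨h1, h2⟩
          exact ⟨not_le.1 h1, h2⟩
        have hlim : IsLimitPt A μ := by
          intro β hβ
          obtain ⟨a, h1, h2⟩ := Filter.nonempty_of_mem (hD' β hβ)
          exact ⟨(a : Cardinal), a.2, h1, h2⟩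
        have hμ0 : ℵ₀ ≤ μ := by
          obtain ⟨a, ha⟩ := Filter.nonempty_of_mem hμmem
          exact le_trans (hA a a.2).1 ha
        rw [cofUlt_eq_succ hgch hnoInacc hA hlim hμ0 hD'] at hκ
        exact Or.inr ⟨μ, hμ0, hlim, Cardinal.lift_injective hκ⟩
    · push_neg at hbig
      exfalso
      have htail : {a : ↥A | κ < (a : Cardinal)} ∈ D := by
        have := (Ultrafilter.compl_mem_iff_notMem (s := {a : ↥A | (a : Cardinal) ≤ κ})).2
          (hbig κ)
        refine Filter.mem_of_superset this ?_
        intro a ha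
        simpa [not_le] using ha
      obtain ⟨S, hsub, hcard, hcf⟩ := csInf_mem (cofSet_nonempty A D)
      rw [← cofUlt_eq_sInf] at hcard
      exact tail_diag hA htail hsub hcf (le_of_eq (hcard.trans hκ.symm))
  · intro hκ
    rcases hκ with hκA | ⟨μ, hμ0, hlim, rfl⟩
    · refine ⟨pure ⟨κ, hκA⟩, ?_⟩
      have hmem : {a : ↥A | a = ⟨κ, hκA⟩} ∈ (pure ⟨κ, hκA⟩ : Ultrafilter ↥A) := by
        simp [Ultrafilter.mem_pure]
      rw [cofUlt_eq_of_atom hA hmem]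
    · obtain ⟨D, hD⟩ := exists_interval_ultrafilter hlim
        (lt_of_lt_of_le Cardinal.aleph0_pos hμ0)
      exact ⟨D, (cofUlt_eq_succ hgch hnoInacc hA hlim hμ0 hD).symm⟩

end Dev5
section Dev6
open Ordinal

variable {A : Set Cardinal.{0}}

lemma cof_lt_of_limitPt
    (hnoInacc : ∀ κ : Cardinal.{0},
      ¬ (ℵ₀ < κ ∧ κ.IsRegular ∧ ∀ ν < κ, Order.succ ν < κ))
    (hA : ∀ a ∈ A, Cardinal.IsRegular a) {μ : Cardinal.{0}} (hμ0 : ℵ₀ ≤ μ)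
    (hlim : IsLimitPt A μ) : μ.ord.cof < μ := by
  have h0 : (0 : Cardinal) < μ := lt_of_lt_of_le Cardinal.aleph0_pos hμ0
  have hμinf : ℵ₀ < μ := by
    obtain ⟨x, hx, -, hxμ⟩ := hlim 0 h0
    exact lt_of_le_of_lt (hA x hx).1 hxμ
  have hsing : ¬ μ.IsRegular := by
    intro hreg
    refine hnoInacc μ ⟨hμinf, hreg, fun ν hν => ?_⟩
    obtain ⟨x, hx, hνx, hxμ⟩ := hlim ν hν
    exact lt_of_le_of_lt (Order.succ_le_of_lt hνx) hxμ
  rcases lt_or_ge μ.ord.cof μ with h | h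
  · exact h
  · exact absurd ⟨hμ0, h⟩ hsing

lemma mk_supported_le {μ : Cardinal.{0}} :
    #({f : ↥A → Ordinal.{0} | f ∈ piSet A ∧ ∀ a : ↥A, ¬((a : Cardinal) < μ) → f a = 0}) ≤
      #(piSet {x : Cardinal.{0} | x ∈ A ∧ x < μ}) := by
  apply Cardinal.mk_le_of_injective (f := fun f =>
    (⟨fun x => f.1 ⟨x.1, x.2.1⟩, fun x => f.2.1 ⟨x.1, x.2.1⟩⟩ :
      ↥(piSet {x : Cardinal.{0} | x ∈ A ∧ x < μ})))
  intro f g h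
  have h' := congrArg Subtype.val h
  apply Subtype.ext
  funext a
  by_cases hax : (a : Cardinal) < μ
  · exact congrFun h' ⟨a.1, a.2, hax⟩
  · rw [f.2.2 a hax, g.2.2 a hax]

lemma mk_piSet_lt_le
    (hgch : ∀ μ : Cardinal.{0}, ℵ₀ ≤ μ → ¬ μ.IsRegular → 2 ^ μ = Order.succ μ)
    (hnoInacc : ∀ κ : Cardinal.{0},
      ¬ (ℵ₀ < κ ∧ κ.IsRegular ∧ ∀ ν < κ, Order.succ ν < κ))
    (hA : ∀ a ∈ A, Cardinal.IsRegular a) {μ : Cardinal.{0}} (hμ0 : ℵ₀ ≤ μ)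
    (hlim : IsLimitPt A μ) :
    #(piSet {x : Cardinal.{0} | x ∈ A ∧ x < μ}) ≤ Cardinal.lift.{1} (Order.succ μ) := by
  have h0 : (0 : Cardinal) < μ := lt_of_lt_of_le Cardinal.aleph0_pos hμ0
  set C : Set Cardinal.{0} := {x : Cardinal.{0} | x ∈ A ∧ x < μ} with hCdef
  have hCbdd : BddAbove C := ⟨μ, fun x hx => le_of_lt hx.2⟩
  have hCne : C.Nonempty := by
    obtain ⟨x, hx, -, hxμ⟩ := hlim 0 h0
    exact ⟨x, hx, hxμ⟩
  have hCsup : sSup C = μ := by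
    apply le_antisymm (csSup_le hCne (fun x hx => le_of_lt hx.2))
    by_contra hlt
    push_neg at hlt
    obtain ⟨x, hx, hsx, hxμ⟩ := hlim (sSup C) hlt
    exact absurd (le_csSup hCbdd (⟨hx, hxμ⟩ : x ∈ C)) (not_le_of_gt hsx)
  exact (prod_bound hgch hnoInacc μ C hCbdd (fun a ha => hA a ha.1) hCsup).1

lemma mem_spec_of_mem_A (hA : ∀ a ∈ A, Cardinal.IsRegular a) {a₀ : Cardinal.{0}}
    (ha₀ : a₀ ∈ A) : a₀ ∈ spec A := by
  refine ⟨hA a₀ ha₀, ?_⟩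
  set a' : ↥A := ⟨a₀, ha₀⟩ with ha'
  have ha₀reg : Cardinal.IsRegular a₀ := hA a₀ ha₀
  set fn : ↥(Set.Iio a₀.ord) → (↥A → Ordinal.{0}) :=
    fun β => (fun a : ↥A => if a = a' then β.1 else 0) with hfn
  have hfninj : Function.Injective fn := by
    intro β γ h
    have := congrFun h a'
    simp only [hfn, if_pos rfl] at this
    exact Subtype.ext this
  have hfnval : ∀ β, fn β a' = β.1 := by
    intro β; simp only [hfn, if_pos rfl]
  refine ⟨Set.range fn, ?_, ?_, ?_⟩
  · rintro f ⟨β, rfl⟩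
    intro a
    by_cases h : a = a'
    · simp only [hfn, if_pos h]
      rw [h]
      exact β.2
    · simp only [hfn, if_neg h]
      exact ord_pos_of_reg (hA a a.2).1
  · rw [Cardinal.mk_range_eq _ hfninj, mk_Iio_ord]
  · rintro F₀ hF₀ hcard ⟨h, hh, hbd⟩
    -- values of F₀ at a'
    have hinj2 : Function.Injective (fun f : ↥F₀ => f.1 a') := by
      intro f g hfg
      obtain ⟨β, hβ⟩ := hF₀ f.2
      obtain ⟨γ, hγ⟩ := hF₀ g.2
      have hfg' : f.1 a' = g.1 a' := hfg
      rw [← hβ, ← hγ] at hfg'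
      simp only [hfnval] at hfg'
      apply Subtype.ext
      rw [← hβ, ← hγ]
      exact congrArg fn (Subtype.ext hfg')
    have hXcard : #(Set.range (fun f : ↥F₀ => f.1 a')) = Cardinal.lift.{1} a₀ := by
      rw [Cardinal.mk_range_eq _ hinj2, hcard]
    have hXsub : Set.range (fun f : ↥F₀ => f.1 a') ⊆ Set.Iio (h a' + 1) := by
      rintro x ⟨f, rfl⟩
      exact lt_of_le_of_lt (hbd f.1 f.2 a')
        (by rw [Ordinal.add_one_eq_succ]; exact Order.lt_succ _)
    have hle : #(Set.range (fun f : ↥F₀ => f.1 a')) ≤ #(Set.Iio (h a' + 1)) :=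
      Cardinal.mk_le_mk_of_subset hXsub
    rw [hXcard, Ordinal.mk_Iio_ordinal, Ordinal.add_one_eq_succ, Ordinal.card_succ,
      Cardinal.lift_le] at hle
    have hha' : (h a').card < a₀ := by
      rw [← Cardinal.lt_ord]
      exact hh a'
    have : a₀ < a₀ := lt_of_le_of_lt hle
      (Cardinal.add_lt_of_lt ha₀reg.1 hha'
        (lt_of_lt_of_le Cardinal.one_lt_aleph0 ha₀reg.1))
    exact this.false

end Dev6
section Dev7
open Ordinal

variable {A : Set Cardinal.{0}}

lemma mk_seg_lt {κ : Cardinal.{0}} (i : ↥(Set.Iio κ.ord)) :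
    #{j : ↥(Set.Iio κ.ord) // j.1 < i.1} = Cardinal.lift.{1} (i.1.card) := by
  have e : {j : ↥(Set.Iio κ.ord) // j.1 < i.1} ≃ ↥(Set.Iio i.1) :=
    { toFun := fun j => ⟨j.1.1, Set.mem_Iio.2 j.2⟩
      invFun := fun x => ⟨⟨x.1, Set.mem_Iio.2
        (lt_trans (Set.mem_Iio.1 x.2) (Set.mem_Iio.1 i.2))⟩, Set.mem_Iio.1 x.2⟩
      left_inv := fun j => Subtype.ext (Subtype.ext rfl)
      right_inv := fun x => rfl }
  rw [Cardinal.mk_congr e, Ordinal.mk_Iio_ordinal]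

lemma mk_seg_le {κ : Cardinal.{0}} (i : ↥(Set.Iio κ.ord)) :
    #{j : ↥(Set.Iio κ.ord) // j.1 ≤ i.1} = Cardinal.lift.{1} ((i.1 + 1).card) := by
  have e : {j : ↥(Set.Iio κ.ord) // j.1 ≤ i.1} ≃ ↥(Set.Iic i.1) :=
    { toFun := fun j => ⟨j.1.1, Set.mem_Iic.2 j.2⟩
      invFun := fun x => ⟨⟨x.1, Set.mem_Iio.2
        (lt_of_le_of_lt (Set.mem_Iic.1 x.2) (Set.mem_Iio.1 i.2))⟩, Set.mem_Iic.1 x.2⟩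
      left_inv := fun j => Subtype.ext (Subtype.ext rfl)
      right_inv := fun x => rfl }
  rw [Cardinal.mk_congr e, ← Order.Iio_succ, ← Ordinal.add_one_eq_succ,
    Ordinal.mk_Iio_ordinal]

lemma succ_mem_spec
    (hgch : ∀ μ : Cardinal.{0}, ℵ₀ ≤ μ → ¬ μ.IsRegular → 2 ^ μ = Order.succ μ)
    (hnoInacc : ∀ κ : Cardinal.{0},
      ¬ (ℵ₀ < κ ∧ κ.IsRegular ∧ ∀ ν < κ, Order.succ ν < κ))
    (hA : ∀ a ∈ A, Cardinal.IsRegular a)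
    {μ : Cardinal.{0}} (hμ0 : ℵ₀ ≤ μ) (hlim : IsLimitPt A μ) :
    Order.succ μ ∈ spec A := by
  classical
  have h0 : (0 : Cardinal) < μ := lt_of_lt_of_le Cardinal.aleph0_pos hμ0
  have hκreg : (Order.succ μ).IsRegular := Cardinal.isRegular_succ hμ0
  have hκ0 : ℵ₀ ≤ Order.succ μ := hκreg.1
  have hκlimit : Order.IsSuccLimit (Order.succ μ).ord := Cardinal.isSuccLimit_ord hκ0
  have hcof : μ.ord.cof < μ := cof_lt_of_limitPt hnoInacc hA hμ0 hlim
  obtain ⟨D, hD⟩ := exists_interval_ultrafilter hlim h0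
  have hltD : {a : ↥A | (a : Cardinal) < μ} ∈ D :=
    Filter.mem_of_superset (hD 0 h0) (fun a ha => ha.2)
  set SB := {f : ↥A → Ordinal.{0} | f ∈ piSet A ∧ ∀ a : ↥A, ¬((a : Cardinal) < μ) → f a = 0}
    with hSBdef
  have hSBsub : SB ⊆ piSet A := fun f hf => hf.1
  have hSBne : SB.Nonempty := ⟨fun _ => 0, zero_mem_piSet hA, fun a _ => rfl⟩
  have hSBcard : #SB ≤ Cardinal.lift.{1} (Order.succ μ) :=
    le_trans mk_supported_le (mk_piSet_lt_le hgch hnoInacc hA hμ0 hlim)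
  obtain ⟨gE, hgE, hgEonto⟩ := exists_enum hSBne hSBcard
  have hstep : ∀ W : Set (↥A → Ordinal.{0}), W ⊆ piSet A → #W ≤ Cardinal.lift.{1} μ →
      ∃ h, h ∈ piSet A ∧ ∀ w ∈ W, {a : ↥A | w a ≤ h a} ∈ D := by
    intro W hWsub hWcard
    by_contra hcon
    push_neg at hcon
    have hcf : ∀ f ∈ piSet A, ∃ g ∈ W, {a : ↥A | f a ≤ g a} ∈ D := by
      intro f hf
      obtain ⟨w, hw, hwD⟩ := hcon f hf
      refine ⟨w, hw, Filter.mem_of_superset (Ultrafilter.compl_mem_iff_notMem.2 hwD) ?_⟩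
      intro a ha
      simp only [Set.mem_compl_iff, Set.mem_setOf_eq, not_le] at ha
      exact le_of_lt ha
    exact (interior_diag hA hD hcof hWsub hcf) hWcard
  set Wset : (i : ↥(Set.Iio (Order.succ μ).ord)) →
      ((j : ↥(Set.Iio (Order.succ μ).ord)) → j.1 < i.1 → (↥A → Ordinal.{0})) →
      Set (↥A → Ordinal.{0}) := fun i rec =>
    ({x | ∃ (j : ↥(Set.Iio (Order.succ μ).ord)) (hj : j.1 < i.1), x = rec j hj} ∪
     {x | ∃ j : ↥(Set.Iio (Order.succ μ).ord), j.1 ≤ i.1 ∧ x = gE j}) ∩ piSet A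
    with hWsetdef
  have hWsub : ∀ i rec, Wset i rec ⊆ piSet A := fun i rec x hx => hx.2
  have hWcard : ∀ i rec, #(Wset i rec) ≤ Cardinal.lift.{1} μ := by
    intro i rec
    have hic : i.1.card ≤ μ := Order.lt_succ_iff.1 (Cardinal.lt_ord.1 i.2)
    have h1 : #({x | ∃ (j : ↥(Set.Iio (Order.succ μ).ord)) (hj : j.1 < i.1), x = rec j hj})
        ≤ Cardinal.lift.{1} μ := by
      have hsub : {x | ∃ (j : ↥(Set.Iio (Order.succ μ).ord)) (hj : j.1 < i.1), x = rec j hj} ⊆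
          Set.range (fun jp : {j : ↥(Set.Iio (Order.succ μ).ord) // j.1 < i.1} =>
            rec jp.1 jp.2) := by
        rintro x ⟨j, hj, rfl⟩
        exact ⟨⟨j, hj⟩, rfl⟩
      refine le_trans (Cardinal.mk_le_mk_of_subset hsub) (le_trans Cardinal.mk_range_le ?_)
      rw [mk_seg_lt i]
      exact Cardinal.lift_le.2 hic
    have h2 : #({x | ∃ j : ↥(Set.Iio (Order.succ μ).ord), j.1 ≤ i.1 ∧ x = gE j})
        ≤ Cardinal.lift.{1} μ := by
      have hsub : {x | ∃ j : ↥(Set.Iio (Order.succ μ).ord), j.1 ≤ i.1 ∧ x = gE j} ⊆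
          Set.range (fun jp : {j : ↥(Set.Iio (Order.succ μ).ord) // j.1 ≤ i.1} =>
            gE jp.1) := by
        rintro x ⟨j, hj, rfl⟩
        exact ⟨⟨j, hj⟩, rfl⟩
      refine le_trans (Cardinal.mk_le_mk_of_subset hsub) (le_trans Cardinal.mk_range_le ?_)
      rw [mk_seg_le i, Ordinal.add_one_eq_succ, Ordinal.card_succ]
      refine Cardinal.lift_le.2 ?_
      calc i.1.card + 1 ≤ μ + 1 := add_le_add_left hic 1
        _ = μ := Cardinal.add_one_eq hμ0
    have hint : Wset i rec ⊆
        ({x | ∃ (j : ↥(Set.Iio (Order.succ μ).ord)) (hj : j.1 < i.1), x = rec j hj} ∪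
         {x | ∃ j : ↥(Set.Iio (Order.succ μ).ord), j.1 ≤ i.1 ∧ x = gE j}) := by
      rw [hWsetdef]
      exact Set.inter_subset_left
    refine le_trans (Cardinal.mk_le_mk_of_subset hint) ?_
    refine le_trans (Cardinal.mk_union_le _ _) ?_
    refine le_trans (add_le_add h1 h2) ?_
    refine le_of_eq (Cardinal.add_eq_self ?_)
    rw [← Cardinal.lift_aleph0.{1,0}]
    exact Cardinal.lift_le.2 hμ0
  have wf : WellFounded (fun (x y : ↥(Set.Iio (Order.succ μ).ord)) => x.1 < y.1) :=
    InvImage.wf (fun x : ↥(Set.Iio (Order.succ μ).ord) => x.1) Ordinal.lt_wf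
  set fseq : ↥(Set.Iio (Order.succ μ).ord) → (↥A → Ordinal.{0}) :=
    wf.fix (fun i rec => fun a =>
      Classical.choose (hstep (Wset i rec) (hWsub i rec) (hWcard i rec)) a + 1) with hfseqdef
  have hfix : ∀ i, fseq i = fun a =>
      Classical.choose (hstep (Wset i (fun j _ => fseq j))
        (hWsub i (fun j _ => fseq j)) (hWcard i (fun j _ => fseq j))) a + 1 := by
    intro i
    rw [hfseqdef]
    exact wf.fix_eq _ i
  have hcs := fun i => Classical.choose_spec (hstep (Wset i (fun j _ => fseq j))
    (hWsub i (fun j _ => fseq j)) (hWcard i (fun j _ => fseq j)))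
  have hfpi : ∀ i, fseq i ∈ piSet A := by
    intro i
    rw [hfix i]
    exact succ_mem_piSet hA (hcs i).1
  have hdom : ∀ i, ∀ w ∈ Wset i (fun j _ => fseq j), {a : ↥A | w a < fseq i a} ∈ D := by
    intro i w hw
    refine Filter.mem_of_superset ((hcs i).2 w hw) ?_
    intro a ha
    have ha' : w a ≤ _ := ha
    simp only [Set.mem_setOf_eq]
    rw [hfix i]
    have hlt1 : Classical.choose (hstep (Wset i (fun j _ => fseq j))
        (hWsub i (fun j _ => fseq j)) (hWcard i (fun j _ => fseq j))) a <
        Classical.choose (hstep (Wset i (fun j _ => fseq j))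
        (hWsub i (fun j _ => fseq j)) (hWcard i (fun j _ => fseq j))) a + 1 := by
      rw [Ordinal.add_one_eq_succ]
      exact Order.lt_succ _
    exact lt_of_le_of_lt ha' hlt1
  have hdom1 : ∀ i j (hj : j.1 < i.1), {a : ↥A | fseq j a < fseq i a} ∈ D :=
    fun i j hj => hdom i _ ⟨Or.inl ⟨j, hj, rfl⟩, hfpi j⟩
  have hdom2 : ∀ i j, j.1 ≤ i.1 → {a : ↥A | gE j a < fseq i a} ∈ D :=
    fun i j hj => hdom i _ ⟨Or.inr ⟨j, hj, rfl⟩, hSBsub (hgE j)⟩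
  have hinj : Function.Injective fseq := by
    intro i j hij
    by_contra hne
    have hne' : i.1 ≠ j.1 := fun h => hne (Subtype.ext h)
    rcases lt_or_gt_of_ne hne' with h | h
    · obtain ⟨a, ha⟩ := Filter.nonempty_of_mem (hdom1 j i h)
      rw [hij] at ha
      simp only [Set.mem_setOf_eq] at ha
      exact lt_irrefl _ ha
    · obtain ⟨a, ha⟩ := Filter.nonempty_of_mem (hdom1 i j h)
      rw [hij] at ha
      simp only [Set.mem_setOf_eq] at ha
      exact lt_irrefl _ ha
  refine ⟨hκreg, Set.range fseq, ?_, ?_, ?_⟩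
  · rintro f ⟨i, rfl⟩
    exact hfpi i
  · rw [Cardinal.mk_range_eq _ hinj, mk_Iio_ord]
  · rintro F₀ hF₀ hcard ⟨h, hh, hbd⟩
    have hIunb : ∀ b : Ordinal.{0}, b < (Order.succ μ).ord →
        ∃ i : ↥(Set.Iio (Order.succ μ).ord), fseq i ∈ F₀ ∧ b < i.1 := by
      intro b hb
      by_contra hcon
      push_neg at hcon
      have hsub : F₀ ⊆ fseq '' {i : ↥(Set.Iio (Order.succ μ).ord) | i.1 ≤ b} := by
        intro f hf
        obtain ⟨i, rfl⟩ := hF₀ hf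
        exact ⟨i, hcon i hf, rfl⟩
      have hle := Cardinal.mk_le_mk_of_subset hsub
      rw [hcard] at hle
      have hle2 : #(fseq '' {i : ↥(Set.Iio (Order.succ μ).ord) | i.1 ≤ b})
          ≤ #({i : ↥(Set.Iio (Order.succ μ).ord) | i.1 ≤ b}) := Cardinal.mk_image_le
      have hseg : #({i : ↥(Set.Iio (Order.succ μ).ord) | i.1 ≤ b}) =
          Cardinal.lift.{1} ((b + 1).card) := mk_seg_le ⟨b, hb⟩
      have hbcard : (b + 1).card < Order.succ μ := by
        rw [← Cardinal.lt_ord, Ordinal.add_one_eq_succ]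
        exact hκlimit.succ_lt hb
      have : Cardinal.lift.{1} (Order.succ μ) < Cardinal.lift.{1} (Order.succ μ) :=
        lt_of_le_of_lt (le_trans hle (le_trans hle2 (le_of_eq hseg)))
          (Cardinal.lift_lt.2 hbcard)
      exact this.false
    set h' : ↥A → Ordinal.{0} := fun a => if (a : Cardinal) < μ then h a + 1 else 0 with hh'def
    have hh'SB : h' ∈ SB := by
      constructor
      · intro a
        rw [hh'def]
        by_cases hx : (a : Cardinal) < μ
        · simp only [if_pos hx]
          exact (Cardinal.isSuccLimit_ord (hA a a.2).1).succ_lt (hh a)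
        · simp only [if_neg hx]
          exact ord_pos_of_reg (hA a a.2).1
      · intro a hx
        rw [hh'def]
        simp only [if_neg hx]
    obtain ⟨j₀, hj₀⟩ := hgEonto h' hh'SB
    obtain ⟨i, hiF₀, hbi⟩ := hIunb j₀.1 j₀.2
    obtain ⟨a, ha1, ha2⟩ := Filter.nonempty_of_mem
      (Filter.inter_mem hltD (hdom2 i j₀ (le_of_lt hbi)))
    have ha1' : (a : Cardinal) < μ := ha1
    have ha2' : gE j₀ a < fseq i a := ha2
    rw [hj₀, hh'def] at ha2'
    simp only [if_pos ha1'] at ha2'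
    have hcontr : h a < h a :=
      lt_of_lt_of_le (lt_trans (by rw [Ordinal.add_one_eq_succ]; exact Order.lt_succ _) ha2')
        (hbd (fseq i) hiF₀ a)
    exact hcontr.false

end Dev7
section Dev8
open Ordinal

variable {A : Set Cardinal.{0}}

lemma spec_subset_E
    (hgch : ∀ μ : Cardinal.{0}, ℵ₀ ≤ μ → ¬ μ.IsRegular → 2 ^ μ = Order.succ μ)
    (hnoInacc : ∀ κ : Cardinal.{0},
      ¬ (ℵ₀ < κ ∧ κ.IsRegular ∧ ∀ ν < κ, Order.succ ν < κ))
    (hA : ∀ a ∈ A, Cardinal.IsRegular a) : spec A ⊆ Espec A := by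
  classical
  rintro κ ⟨hκreg, F, hFsub, hFcard, hFunb⟩
  by_cases hκA : κ ∈ A
  · exact Or.inl hκA
  have hκ0 : ℵ₀ ≤ κ := hκreg.1
  have hκpos : (0 : Cardinal) < κ := lt_of_lt_of_le Cardinal.aleph0_pos hκ0
  have hgta : ∀ a : ↥A, ¬((a : Cardinal) < κ) → κ < (a : Cardinal) := by
    intro a ha
    rcases lt_or_eq_of_le (not_lt.1 ha) with h | h
    · exact h
    · exact absurd (h ▸ a.2) hκA
  set ρ : (↥A → Ordinal.{0}) → (↥A → Ordinal.{0}) :=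
    fun f a => if (a : Cardinal) < κ then f a else 0 with hρdef
  have hρpi : ∀ f ∈ piSet A, ρ f ∈ piSet A := by
    intro f hf a
    rw [hρdef]
    by_cases h : (a : Cardinal) < κ
    · simp only [if_pos h]; exact hf a
    · simp only [if_neg h]; exact ord_pos_of_reg (hA a a.2).1
  have hρsupp : ∀ f, ∀ a : ↥A, ¬((a : Cardinal) < κ) → ρ f a = 0 := by
    intro f a h
    rw [hρdef]; simp only [if_neg h]
  have hρeq : ∀ f, ∀ a : ↥A, ((a : Cardinal) < κ) → ρ f a = f a := by
    intro f a h
    rw [hρdef]; simp only [if_pos h]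
  -- tail bounding for κ-sized families
  have htails : ∀ (F₀ : Set (↥A → Ordinal.{0})), F₀ ⊆ piSet A →
      Cardinal.mk F₀ ≤ Cardinal.lift.{1} κ → ∀ a : ↥A, ¬((a : Cardinal) < κ) →
      (sSup (Set.range fun f : ↥F₀ => f.1 a) < (a : Cardinal).ord ∧
        ∀ f ∈ F₀, f a ≤ sSup (Set.range fun f : ↥F₀ => f.1 a)) := by
    intro F₀ hF₀sub hF₀card a ha
    have hXsub : (Set.range fun f : ↥F₀ => f.1 a) ⊆ Set.Iio (a : Cardinal).ord := by
      rintro x ⟨f, rfl⟩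
      exact hF₀sub f.2 a
    constructor
    · refine sSup_lt_of_card hXsub ?_
      rw [(hA a a.2).cof_eq]
      exact lt_of_le_of_lt (le_trans Cardinal.mk_range_le hF₀card)
        (Cardinal.lift_lt.2 (hgta a ha))
    · intro f hf
      exact le_sSup_of_lt hXsub ⟨⟨f, hf⟩, rfl⟩
  by_cases hcase : #(ρ '' F) = Cardinal.lift.{1} κ
  · -- the restricted family is large; Lemma P applies
    have h1 : Cardinal.lift.{1} κ ≤ #({f : ↥A → Ordinal.{0} |
        f ∈ piSet A ∧ ∀ a : ↥A, ¬((a : Cardinal) < κ) → f a = 0}) := by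
      rw [← hcase]
      apply Cardinal.mk_le_mk_of_subset
      rintro x ⟨f, hf, rfl⟩
      exact ⟨hρpi f (hFsub hf), fun a ha => hρsupp f a ha⟩
    set C := {x : Cardinal.{0} | x ∈ A ∧ x < κ} with hCdef
    have hCbdd : BddAbove C := ⟨κ, fun x hx => le_of_lt hx.2⟩
    obtain ⟨hPsucc, hPmem⟩ := prod_bound hgch hnoInacc (sSup C) C hCbdd
      (fun a ha => hA a ha.1) rfl
    have hκle : Cardinal.lift.{1} κ ≤ #(piSet C) := le_trans h1 mk_supported_le
    have hκsucc : κ ≤ Order.succ (sSup C) :=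
      Cardinal.lift_le.1 (le_trans hκle hPsucc)
    have hCne : C.Nonempty := by
      by_contra hemp
      rw [Set.not_nonempty_iff_eq_empty] at hemp
      rw [hemp, csSup_empty] at hκsucc
      have : κ ≤ 1 := le_trans hκsucc (by
        have : Order.succ (⊥ : Cardinal.{0}) = 1 := by
          rw [← Cardinal.succ_zero]
          rfl
        rw [this])
      exact absurd (le_trans hκ0 this) (by simp [Cardinal.one_lt_aleph0.not_ge])
    have hCltκ : sSup C < κ := by
      have hle : sSup C ≤ κ := csSup_le hCne (fun x hx => le_of_lt hx.2)
      rcases lt_or_eq_of_le hle with h | h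
      · exact h
      · exfalso
        have hlimκ : ∀ ν < κ, ∃ x ∈ C, ν < x := fun ν hν =>
          exists_lt_of_lt_csSup hCne (h.symm ▸ hν)
        have hℵ : ℵ₀ < κ := by
          obtain ⟨x, hx, -⟩ := hlimκ 0 hκpos
          exact lt_of_le_of_lt (hA x hx.1).1 hx.2
        exact hnoInacc κ ⟨hℵ, hκreg, fun ν hν => by
          obtain ⟨x, hx, hνx⟩ := hlimκ ν hν
          exact lt_of_le_of_lt (Order.succ_le_of_lt hνx) hx.2⟩
    have hκeq : κ = Order.succ (sSup C) := le_antisymm hκsucc (Order.succ_le_of_lt hCltκ)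
    have hsupC : sSup C ∉ C := by
      intro hmem
      have h2 := hPmem hmem
      exact absurd (Cardinal.lift_le.1 (le_trans hκle h2)) (not_le.2 hCltκ)
    have hμ0 : ℵ₀ ≤ sSup C := by
      obtain ⟨x, hx⟩ := hCne
      exact le_trans (hA x hx.1).1 (le_csSup hCbdd hx)
    have hlimpt : IsLimitPt A (sSup C) := by
      intro β hβ
      obtain ⟨x, hx, hβx⟩ := exists_lt_of_lt_csSup hCne hβ
      have hxlt : x < sSup C := lt_of_le_of_ne (le_csSup hCbdd hx)
        (fun he => hsupC (he ▸ hx))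
      exact ⟨x, hx.1, hβx, hxlt⟩
    exact Or.inr ⟨sSup C, hμ0, hlimpt, hκeq⟩
  · exfalso
    have hcase' : #(ρ '' F) < Cardinal.lift.{1} κ :=
      lt_of_le_of_ne (le_trans Cardinal.mk_image_le (le_of_eq hFcard)) hcase
    by_cases hfib : ∃ g : ↥(ρ '' F), #(F ∩ ρ ⁻¹' {g.1} : Set (↥A → Ordinal.{0})) =
        Cardinal.lift.{1} κ
    · obtain ⟨g, hg⟩ := hfib
      obtain ⟨f₀, hf₀F, hf₀⟩ := g.2
      refine hFunb (F ∩ ρ ⁻¹' {g.1}) Set.inter_subset_left hg ?_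
      set F₀ := F ∩ ρ ⁻¹' {g.1} with hF₀def
      have hF₀sub : F₀ ⊆ piSet A := fun f hf => hFsub hf.1
      have hF₀card : #F₀ ≤ Cardinal.lift.{1} κ := le_of_eq hg
      set h : ↥A → Ordinal.{0} := fun a =>
        if (a : Cardinal) < κ then g.1 a
        else sSup (Set.range fun f : ↥F₀ => f.1 a) with hhdef
      have hgpi : g.1 ∈ piSet A := hf₀ ▸ hρpi f₀ (hFsub hf₀F)
      refine ⟨h, ?_, ?_⟩
      · intro a
        rw [hhdef]
        by_cases hx : (a : Cardinal) < κ
        · simp only [if_pos hx]; exact hgpi a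
        · simp only [if_neg hx]
          exact (htails F₀ hF₀sub hF₀card a hx).1
      · intro f hf a
        rw [hhdef]
        by_cases hx : (a : Cardinal) < κ
        · simp only [if_pos hx]
          have : ρ f = g.1 := hf.2
          rw [← this, hρeq f a hx]
        · simp only [if_neg hx]
          exact (htails F₀ hF₀sub hF₀card a hx).2 f hf
    · push_neg at hfib
      have hfib' : ∀ g : ↥(ρ '' F), #(F ∩ ρ ⁻¹' {g.1} : Set (↥A → Ordinal.{0})) <
          Cardinal.lift.{1} κ := fun g =>
        lt_of_le_of_ne (le_trans (Cardinal.mk_le_mk_of_subset Set.inter_subset_left)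
          (le_of_eq hFcard)) (hfib g)
      have hunion : F ⊆ ⋃ g : ↥(ρ '' F), (F ∩ ρ ⁻¹' {g.1}) := by
        intro f hf
        exact Set.mem_iUnion.2 ⟨⟨ρ f, ⟨f, hf, rfl⟩⟩, hf, rfl⟩
      have hle := Cardinal.mk_le_mk_of_subset hunion
      rw [hFcard] at hle
      have h2 : #(⋃ g : ↥(ρ '' F), (F ∩ ρ ⁻¹' {g.1})) ≤
          Cardinal.sum (fun g : ↥(ρ '' F) =>
            #(F ∩ ρ ⁻¹' {g.1} : Set (↥A → Ordinal.{0}))) :=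
        Cardinal.mk_iUnion_le_sum_mk
      have h3 : Cardinal.sum (fun g : ↥(ρ '' F) =>
          #(F ∩ ρ ⁻¹' {g.1} : Set (↥A → Ordinal.{0}))) < Cardinal.lift.{1} κ :=
        Cardinal.sum_lt_of_isRegular (isRegular_lift hκreg) hcase' hfib'
      exact absurd (le_trans hle h2) (not_le.2 h3)

end Dev8
/-- If `2^μ = μ⁺` for every singular cardinal `μ` and there are no
regular limit (i.e. weakly inaccessible) cardinals, then `spec(A) = pcf(A)` for
every set `A` of infinite regular cardinals. -/
theorem statement10
    (hgch : ∀ μ : Cardinal.{0}, ℵ₀ ≤ μ → ¬ μ.IsRegular → 2 ^ μ = Order.succ μ)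
    (hnoInacc : ∀ κ : Cardinal.{0},
      ¬ (ℵ₀ < κ ∧ κ.IsRegular ∧ ∀ ν < κ, Order.succ ν < κ))
    (A : Set Cardinal.{0}) (hA : ∀ a ∈ A, a.IsRegular) :
    spec A = pcf A := by
  have h1 : spec A = Espec A := by
    apply Set.Subset.antisymm
    · exact spec_subset_E hgch hnoInacc hA
    · rintro κ (h | ⟨μ, hμ0, hlim, rfl⟩)
      · exact mem_spec_of_mem_A hA h
      · exact succ_mem_spec hgch hnoInacc hA hμ0 hlim
  rw [h1, pcf_eq_E hgch hnoInacc hA]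

end TukeySpec
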